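/- Let A_0(x) and A_1(x) be formal power series with A_0 = 2x(1+A_0)·A_1 and A_1 = (1+A_0)^2. Then A_0 = 2x(1+A_0)^3, and for n ≥ 1 the coefficient of x^n in A_0 is (2^n/n)·C(3n, n-1). -/

import Mathlib

open PowerSeries

theorem stmt7 (A₀ A₁ : PowerSeries ℚ) (hc : constantCoeff A₀ = 0)
    (h1 : A₀ = 2 * X * (1 + A₀) * A₁) (h2 : A₁ = (1 + A₀) ^ 2) :
    A₀ = 2 * X * (1 + A₀) ^ 3 ∧
      ∀ n : ℕ, 1 ≤ n →
        coeff n A₀ = 2 ^ n / (n : ℚ) * Nat.choose (3 * n) (n - 1) := by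
  rw [h2] at h1
  have h3 : A₀ = 2 * X * (1 + A₀) ^ 3 := by linear_combination h1
  refine ⟨h3, ?_⟩
  have hd2 : d⁄dX ℚ (2:ℚ⟦X⟧) = 0 := by
    have : (2:ℚ⟦X⟧) = C 2 := by simp [map_ofNat]
    rw [this, derivative_C]
  set v := d⁄dX ℚ A₀ with hv
  set w := d⁄dX ℚ v with hw
  have E1 : v = 2*(1+A₀)^3 + 6*X*(1+A₀)^2*v := by
    have := congrArg (d⁄dX ℚ) h3
    simp only [Derivation.leibniz, Derivation.leibniz_pow, smul_eq_mul, map_add, map_one, Derivation.map_one_eq_zero,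
      derivative_X, hd2, ← hv] at this
    linear_combination this
  have L1 : X*(1-2*A₀)*v = A₀*(1+A₀) := by
    linear_combination (X*(1+A₀))*E1 - (1+A₀+3*X*v)*h3
  have L2 : (1-2*A₀)*v - 2*X*v^2 + X*(1-2*A₀)*w = v + 2*A₀*v := by
    have := congrArg (d⁄dX ℚ) L1
    simp only [Derivation.leibniz, Derivation.leibniz_pow, smul_eq_mul, map_add, map_sub,
      map_one, Derivation.map_one_eq_zero, derivative_X, hd2, ← hv, ← hw] at this
    linear_combination this
  have R3 : X*(1-2*A₀)^2*w = 6*A₀*(1-A₀)*v := by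
    linear_combination (1-2*A₀)*L2 + 2*v*L1
  have hAne : A₀ ≠ 0 := by
    intro h
    rw [h] at h3
    have h4 : (0:ℚ⟦X⟧) = X * 2 := by linear_combination h3
    have h5 := congrArg (coeff 1) h4
    erw [coeff_succ_X_mul (n := 0)] at h5
    simp only [map_zero, coeff_zero_eq_constantCoeff, map_ofNat] at h5
    norm_num at h5
  have T : A₀ * (X*(2-27*X)*w + (3-54*X)*v - 6*A₀ - 6) = 0 := by
    linear_combination (X*(A₀+4))*R3 + 6*L1 +
      (6*(1+A₀) + 27*X^2*w + 54*X*v + (X*(2-27*X)*w + (3-54*X)*v - 6*A₀-6))*h3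
  have Teq : 2*(X*w) + 3*v = 27*(X^2*w) + 54*(X*v) + 6*A₀ + 6 := by
    rcases mul_eq_zero.mp T with h | h
    · exact absurd h hAne
    · linear_combination h
  have Teq' : (C 2)*(X*w) + (C 3)*v
      = (C 27)*(X^2*w) + (C 54)*(X*v) + (C 6)*A₀ + (C 6)*1 := by
    simp only [map_ofNat]
    linear_combination Teq
  have cv : ∀ n:ℕ, coeff n v = coeff (n+1) A₀ * (n+1) := fun n => by
    rw [hv, coeff_derivative]
  have cw : ∀ n:ℕ, coeff n w = coeff (n+2) A₀ * ((n+2)*(n+1)) := fun n => by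
    rw [hw, coeff_derivative, cv]
    push_cast
    ring
  have ha1 : coeff 1 A₀ = 2 := by
    have h0 := congrArg (coeff 0) Teq'
    simp only [map_add, coeff_C_mul, coeff_zero_eq_constantCoeff, map_mul, map_pow,
      constantCoeff_X, zero_mul, mul_zero, map_one, mul_one, hc] at h0
    have := cv 0
    rw [coeff_zero_eq_constantCoeff] at this
    rw [this] at h0
    norm_num [constantCoeff_C] at h0
    linarith
  have ha2 : coeff 2 A₀ = 12 := by
    have h1' := congrArg (coeff 1) Teq'
    simp only [map_add, coeff_C_mul] at h1'
    rw [show (1:ℕ) = 0+1 from rfl, coeff_succ_X_mul, coeff_succ_X_mul] at h1'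
    rw [coeff_X_pow_mul'] at h1'
    norm_num at h1'
    have cv0 : constantCoeff v = coeff 1 A₀ := by
      have := cv 0
      rw [coeff_zero_eq_constantCoeff] at this
      simpa using this
    have cw0 : constantCoeff w = coeff 2 A₀ * 2 := by
      have := cw 0
      rw [coeff_zero_eq_constantCoeff] at this
      push_cast at this
      linarith [this]
    rw [cv0, cw0, cv 1, ha1] at h1'
    push_cast at h1'
    linarith
  have hrec : ∀ k:ℕ, ((k:ℚ)+3)*(2*(k+2)+3) * coeff (k+3) A₀
      = (27*((k:ℚ)+2)^2+27*((k:ℚ)+2)+6) * coeff (k+2) A₀ := by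
    intro k
    have hk := congrArg (coeff (k+2)) Teq'
    simp only [map_add, coeff_C_mul] at hk
    rw [coeff_X_pow_mul] at hk
    rw [show k+2 = (k+1)+1 from rfl, coeff_succ_X_mul, coeff_succ_X_mul] at hk
    rw [coeff_one] at hk
    norm_num at hk
    rw [cv (k+1+1), cv (k+1), cw (k+1), cw k] at hk
    push_cast at hk
    rw [show k+1+1+1 = k+3 from rfl, show k+1+1 = k+2 from rfl] at hk
    linear_combination hk
  have rec1 : ∀ n:ℕ, 1 ≤ n → ((n:ℚ)+1)*(2*n+3)*coeff (n+1) A₀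
      = 3*(3*(n:ℚ)+1)*(3*(n:ℚ)+2)*coeff n A₀ := by
    intro n hn
    match n, hn with
    | 1, _ => rw [ha1, ha2]; norm_num
    | (k+2), _ =>
      have := hrec k
      push_cast
      push_cast at this
      linear_combination this
  have main : ∀ m:ℕ, coeff (m+1) A₀ = 2^(m+1)/((m:ℚ)+1) * (Nat.choose (3*m+3) m) := by
    intro m
    induction m with
    | zero => simpa using ha1
    | succ k ih =>
      have hr := rec1 (k+1) (by omega)
      rw [ih] at hr
      have hfact1 : ((3*k+6).factorial : ℚ)
          = (3*(k:ℚ)+6)*(3*(k:ℚ)+5)*(3*(k:ℚ)+4)*((3*k+3).factorial : ℚ) := by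
        rw [show 3*k+6 = (3*k+5)+1 from rfl, show 3*k+5 = (3*k+4)+1 from rfl,
          show 3*k+4 = (3*k+3)+1 from rfl, Nat.factorial_succ, Nat.factorial_succ,
          Nat.factorial_succ]
        push_cast
        ring
      have hfact2 : ((2*k+5).factorial : ℚ)
          = (2*(k:ℚ)+5)*(2*(k:ℚ)+4)*((2*k+3).factorial : ℚ) := by
        rw [show 2*k+5 = (2*k+4)+1 from rfl, show 2*k+4 = (2*k+3)+1 from rfl,
          Nat.factorial_succ, Nat.factorial_succ]
        push_cast
        ring
      have hfact3 : ((k+1).factorial : ℚ) = ((k:ℚ)+1)*(k.factorial : ℚ) := by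
        rw [Nat.factorial_succ]
        push_cast
        ring
      have hcomb : 2*((k:ℚ)+1)*(2*(k:ℚ)+5)*(Nat.choose (3*k+6) (k+1) : ℚ)
          = 3*(3*(k:ℚ)+4)*(3*(k:ℚ)+5)*(Nat.choose (3*k+3) k : ℚ) := by
        rw [Nat.cast_choose ℚ (show k+1 ≤ 3*k+6 by omega),
          Nat.cast_choose ℚ (show k ≤ 3*k+3 by omega),
          show 3*k+6-(k+1) = 2*k+5 from by omega, show 3*k+3-k = 2*k+3 from by omega,
          hfact1, hfact2, hfact3]
        have n1 : ((3*k+3).factorial : ℚ) ≠ 0 := Nat.cast_ne_zero.2 (Nat.factorial_ne_zero _)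
        have n2 : ((2*k+3).factorial : ℚ) ≠ 0 := Nat.cast_ne_zero.2 (Nat.factorial_ne_zero _)
        have n3 : (k.factorial : ℚ) ≠ 0 := Nat.cast_ne_zero.2 (Nat.factorial_ne_zero _)
        have n4 : ((k:ℚ)+1) ≠ 0 := by positivity
        have n5 : (2*(k:ℚ)+4) ≠ 0 := by positivity
        have n6 : (2*(k:ℚ)+5) ≠ 0 := by positivity
        field_simp
        ring
      have n4 : ((k:ℚ)+1) ≠ 0 := by positivity
      have n7 : ((k:ℚ)+2) ≠ 0 := by positivity
      have n6 : (2*(k:ℚ)+5) ≠ 0 := by positivity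
      rw [show 3*(k+1)+3 = 3*k+6 from by ring]
      have ha : (coeff (k+1+1)) A₀
          = 3*(3*(k:ℚ)+4)*(3*(k:ℚ)+5) * (2^(k+1)/((k:ℚ)+1) * (((3*k+3).choose k : ℕ) : ℚ))
            / (((k:ℚ)+2)*(2*(k:ℚ)+5)) := by
        rw [eq_div_iff (by positivity)]
        push_cast at hr
        linear_combination hr
      rw [ha]
      push_cast
      field_simp
      linear_combination (-(2:ℚ)^k*(2*(k:ℚ)+4)) * hcomb
  intro n hn
  obtain ⟨m, rfl⟩ : ∃ m, n = m+1 := ⟨n-1, by omega⟩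
  rw [main m, show 3*(m+1) = 3*m+3 from by ring, show m+1-1 = m from by omega]
  push_cast
  ring
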